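/- For every prime p ∈ {7, 11, 13} and all integers n ≥ 0, a_3(pn + 6) ≡ 0 (mod 2). -/

import Mathlib

open Finset PowerSeries


lemma even_card_aux {α : Type*} [DecidableEq α] (f : α → α) :
    ∀ (n : ℕ) (s : Finset α), s.card ≤ n → (∀ a ∈ s, f a ∈ s) → (∀ a ∈ s, f (f a) = a) →
      (∀ a ∈ s, f a ≠ a) → 2 ∣ s.card := by
  intro n
  induction n with
  | zero => intro s hc _ _ _; interval_cases h : s.card <;> simp_all
  | succ n ih =>
    intro s hc h1 h2 h3
    rcases s.eq_empty_or_nonempty with rfl | ⟨a, ha⟩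
    · simp
    · have hfa : f a ∈ s := h1 a ha
      have hne : f a ≠ a := h3 a ha
      set t := (s.erase a).erase (f a) with ht
      have hmem : ∀ x, x ∈ t ↔ x ≠ f a ∧ x ≠ a ∧ x ∈ s := by
        intro x; simp only [ht, Finset.mem_erase]
      have hsub : ({a, f a} : Finset α) ⊆ s := by
        intro x hx; simp at hx; rcases hx with rfl | rfl <;> assumption
      have h2le : 2 ≤ s.card := by
        have := Finset.card_le_card hsub
        rwa [Finset.card_pair (Ne.symm hne)] at this
      have hcard : t.card + 2 = s.card := by
        rw [ht, Finset.card_erase_of_mem, Finset.card_erase_of_mem ha]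
        · omega
        · rw [Finset.mem_erase]; exact ⟨hne, hfa⟩
      have hdvd : 2 ∣ t.card := by
        refine ih t (by omega) ?_ ?_ ?_
        · intro x hx
          rw [hmem] at hx ⊢
          obtain ⟨hx1, hx2, hx3⟩ := hx
          refine ⟨?_, ?_, h1 x hx3⟩
          · intro h; apply hx2; have := congrArg f h; rwa [h2 x hx3, h2 a ha] at this
          · intro h; apply hx1; have := congrArg f h; rwa [h2 x hx3] at this
        · intro x hx; rw [hmem] at hx; exact h2 x hx.2.2
        · intro x hx; rw [hmem] at hx; exact h3 x hx.2.2
      omega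

lemma even_card_of_invol {α : Type*} [DecidableEq α] (s : Finset α) (f : α → α)
    (h1 : ∀ a ∈ s, f a ∈ s) (h2 : ∀ a ∈ s, f (f a) = a) (h3 : ∀ a ∈ s, f a ≠ a) :
    2 ∣ s.card :=
  even_card_aux f s.card s le_rfl h1 h2 h3

lemma sum_Icc_twice (a b : ℕ) (h : a ≤ b + 1) :
    (∑ x ∈ Icc a b, x) * 2 + a * (a - 1) = (b + 1) * b := by
  have h1 := Finset.sum_Ico_consecutive (id : ℕ → ℕ) (Nat.zero_le a) h
  rw [Finset.Ico_add_one_right_eq_Icc] at h1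
  simp only [← Finset.range_eq_Ico] at h1
  have g1 := Finset.sum_range_id_mul_two a
  have g2 := Finset.sum_range_id_mul_two (b + 1)
  simp only [id] at h1
  have g2' : (∑ x ∈ range (b+1), x) * 2 = (b+1) * b := by simpa using g2
  have : (∑ x ∈ range a, x) + (∑ x ∈ Icc a b, x) = ∑ x ∈ range (b+1), x := h1
  linarith [this, g1, g2']

lemma sum_Icc_left_insert (a b : ℕ) (h : a ≤ b) :
    (∑ x ∈ Icc a b, x) = a + ∑ x ∈ Icc (a+1) b, x := by
  rw [← Finset.Ioc_insert_left h, Finset.sum_insert (by simp), Finset.Icc_add_one_left_eq_Ioc]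

lemma sum_Icc_right_insert (a b : ℕ) (h : a ≤ b + 1) :
    (∑ x ∈ Icc a (b+1), x) = (b+1) + ∑ x ∈ Icc a b, x := by
  rw [← Finset.Ico_insert_right h, Finset.sum_insert (by simp), Finset.Ico_add_one_right_eq_Icc]


lemma map_ringInverse {R S : Type*} [CommRing R] [CommRing S] (f : R →+* S) (u : R)
    (hu : IsUnit u) : f (Ring.inverse u) = Ring.inverse (f u) := by
  obtain ⟨v, rfl⟩ := hu
  have h1 : f (v : R) = ((Units.map (f : R →* S)) v : S) := (Units.coe_map (f : R →* S) v).symm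
  rw [h1, Ring.inverse_unit, Ring.inverse_unit, ← map_inv, Units.coe_map]
  rfl


lemma two_eq_zero : (2 : PowerSeries (ZMod 2)) = 0 := by
  have h : (2 : (ZMod 2)⟦X⟧) = PowerSeries.C (2 : ZMod 2) := (map_ofNat _ 2).symm
  rw [h, show (2:ZMod 2) = 0 from rfl, map_zero]

lemma unit_fact {R : Type*} [CommRing R] (k : ℕ) : IsUnit ((1 : PowerSeries R) - X ^ (k+1)) := by
  rw [PowerSeries.isUnit_iff_constantCoeff]
  simp

lemma key_prod (N : ℕ) :
    (∏ i ∈ range (N + 1), ((1 : PowerSeries (ZMod 2)) - X ^ (2 * (i + 1))) ^ 2) *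
      ∏ i ∈ range (N + 1), (Ring.inverse ((1 : PowerSeries (ZMod 2)) - X ^ (i + 1))) ^ 3 =
    ∏ i ∈ range (N + 1), ((1 : PowerSeries (ZMod 2)) + X ^ (i + 1)) := by
  rw [← Finset.prod_mul_distrib]
  refine Finset.prod_congr rfl fun i _ => ?_
  have h2 := two_eq_zero
  have h1 : ((1 : PowerSeries (ZMod 2)) - X ^ (2 * (i + 1))) = (1 - X ^ (i+1)) ^ 2 := by
    linear_combination ((X : PowerSeries (ZMod 2))^(i+1) - (X : PowerSeries (ZMod 2))^(2*(i+1))) * h2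
  rw [h1, ← pow_mul]
  have h3 : ((1 : PowerSeries (ZMod 2)) - X ^ (i+1)) ^ (2*2) * (Ring.inverse ((1:PowerSeries (ZMod 2)) - X ^ (i + 1))) ^ 3
      = (1 - X^(i+1)) * ((1 - X^(i+1)) * Ring.inverse ((1:PowerSeries (ZMod 2)) - X^(i+1))) ^ 3 := by
    rw [mul_pow]; ring
  rw [h3, Ring.mul_inverse_cancel _ (unit_fact i), one_pow, mul_one]
  linear_combination (-(X : PowerSeries (ZMod 2))^(i+1)) * h2


def gapb (S : Finset ℕ) (m : ℕ) : ℕ := ((range m).filter (fun x => x ∉ S)).sup id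

def frk (S : Finset ℕ) : Finset ℕ :=
  if h : S.Nonempty then
    if S.min' h ≤ S.max' h - gapb S (S.max' h) then
      ((S.filter (fun x => x ≤ S.max' h - S.min' h)).erase (S.min' h)) ∪
        Icc (S.max' h - S.min' h + 2) (S.max' h + 1)
    else
      insert (S.max' h - gapb S (S.max' h))
        ((S.filter (fun x => x ≤ gapb S (S.max' h) - 1)) ∪
          Icc (gapb S (S.max' h)) (S.max' h - 1))
  else ∅

lemma gapb_spec (S : Finset ℕ) (hne : S.Nonempty) (h0 : 0 ∉ S) :
    gapb S (S.max' hne) < S.max' hne ∧ gapb S (S.max' hne) ∉ S ∧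
      (∀ x, gapb S (S.max' hne) < x → x ≤ S.max' hne → x ∈ S) := by
  have hmS : S.max' hne ∈ S := S.max'_mem hne
  have hm1 : 1 ≤ S.max' hne := by
    rcases Nat.eq_zero_or_pos (S.max' hne) with h | h
    · exact absurd (h ▸ hmS) h0
    · exact h
  set m := S.max' hne with hm
  set t := (range m).filter (fun x => x ∉ S) with htdef
  have htne : t.Nonempty := ⟨0, by simp [htdef, Finset.mem_filter, Finset.mem_range]; exact ⟨hm1, h0⟩⟩
  have hgt : gapb S m ∈ t := by
    have h1 : t.sup id = t.max' htne := by
      rw [← Finset.sup'_eq_sup htne id]; rfl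
    rw [gapb, ← htdef, h1]
    exact t.max'_mem htne
  rw [htdef, Finset.mem_filter, Finset.mem_range] at hgt
  refine ⟨hgt.1, hgt.2, ?_⟩
  intro x hgx hxm
  rcases Nat.lt_or_ge x m with hlt | hge
  · by_contra hxS
    have hxt : x ∈ t := by rw [htdef, Finset.mem_filter, Finset.mem_range]; exact ⟨hlt, hxS⟩
    have := Finset.le_sup (f := id) hxt
    rw [gapb, ← htdef] at hgx
    simp only [id] at this
    omega
  · have : x = m := by omega
    exact this ▸ hmS

theorem caseA (S : Finset ℕ) (hne : S.Nonempty) (h0 : 0 ∉ S)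
    (hpent : ∀ c m', S = Icc (c+1) m' → m' ≠ 2*c ∧ m' ≠ 2*c+1)
    (hbr : S.min' hne ≤ S.max' hne - gapb S (S.max' hne)) :
    (frk S).sum id = S.sum id ∧ 0 ∉ frk S ∧ frk S ≠ S ∧ frk (frk S) = S := by
  obtain ⟨hblt, hbS, hrun⟩ := gapb_spec S hne h0
  set m := S.max' hne with hm
  set s := S.min' hne with hs
  set b := gapb S m with hb
  have sS : s ∈ S := S.min'_mem hne
  have mS : m ∈ S := S.max'_mem hne
  have le_m : ∀ x ∈ S, x ≤ m := fun x hx => S.le_max' x hx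
  have s_le : ∀ x ∈ S, s ≤ x := fun x hx => S.min'_le x hx
  have hs1 : 1 ≤ s := Nat.pos_of_ne_zero (fun h => h0 (h ▸ sS))
  have hsm : s ≤ m := s_le m mS
  have hsb : s ≤ b + 1 := s_le (b+1) (hrun (b+1) (by omega) (by omega))
  have hsnb : s ≠ b := fun h => hbS (h ▸ sS)
  have hA : s + b ≤ m := by omega
  have h2s : 2 * s ≤ m := by
    rcases Nat.lt_or_ge s (b+1) with hc | hc
    · omega
    · have hseq : s = b + 1 := by omega
      have hrunS : S = Icc (b+1) m := by
        ext x
        simp only [Finset.mem_Icc]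
        constructor
        · intro hx; exact ⟨hseq ▸ s_le x hx, le_m x hx⟩
        · intro hx; exact hrun x (by omega) hx.2
      have := (hpent b m hrunS).2
      omega
  set S' := ((S.filter (fun x => x ≤ m - s)).erase s) ∪ Icc (m - s + 2) (m + 1) with hS'
  have hfrk : frk S = S' := by
    rw [frk, dif_pos hne, if_pos hbr]
  have hmem' : ∀ x, x ∈ S' ↔ (x ∈ S ∧ x ≤ m - s ∧ x ≠ s) ∨ (m - s + 2 ≤ x ∧ x ≤ m + 1) := by
    intro x
    simp only [hS', Finset.mem_union, Finset.mem_erase, Finset.mem_filter, Finset.mem_Icc]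
    tauto
  -- sums
  have hsplit : S = (S.filter (fun x => x ≤ m - s)) ∪ Icc (m - s + 1) m := by
    ext x
    simp only [Finset.mem_union, Finset.mem_filter, Finset.mem_Icc]
    constructor
    · intro hx
      have := le_m x hx
      by_cases hc : x ≤ m - s
      · exact Or.inl ⟨hx, hc⟩
      · exact Or.inr (by omega)
    · rintro (⟨hx, _⟩ | ⟨h1, h2⟩)
      · exact hx
      · exact hrun x (by omega) h2
  have hd1 : Disjoint (S.filter (fun x => x ≤ m - s)) (Icc (m - s + 1) m) := by
    rw [Finset.disjoint_left]
    intro x hx hx2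
    simp only [Finset.mem_filter, Finset.mem_Icc] at hx hx2
    omega
  have hd2 : Disjoint ((S.filter (fun x => x ≤ m - s)).erase s) (Icc (m - s + 2) (m + 1)) := by
    rw [Finset.disjoint_left]
    intro x hx hx2
    simp only [Finset.mem_erase, Finset.mem_filter, Finset.mem_Icc] at hx hx2
    omega
  have hs_in : s ∈ S.filter (fun x => x ≤ m - s) := by
    simp only [Finset.mem_filter]; exact ⟨sS, by omega⟩
  have e1 : ∑ x ∈ S, x = (∑ x ∈ S.filter (fun x => x ≤ m - s), x) + ∑ x ∈ Icc (m - s + 1) m, x := by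
    conv_lhs => rw [hsplit]
    rw [Finset.sum_union hd1]
  have e2 : (∑ x ∈ (S.filter (fun x => x ≤ m - s)).erase s, x) + s
      = ∑ x ∈ S.filter (fun x => x ≤ m - s), x := Finset.sum_erase_add _ _ hs_in
  have e3 : ∑ x ∈ Icc (m - s + 1) m, x = (m - s + 1) + ∑ x ∈ Icc (m - s + 2) m, x :=
    sum_Icc_left_insert _ _ (by omega)
  have e4 : ∑ x ∈ Icc (m - s + 2) (m + 1), x = (m + 1) + ∑ x ∈ Icc (m - s + 2) m, x := by
    exact sum_Icc_right_insert _ _ (by omega)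
  have hsum : (frk S).sum id = S.sum id := by
    rw [hfrk]
    show (∑ x ∈ S', id x) = ∑ x ∈ S, id x
    simp only [id_eq]
    rw [hS', Finset.sum_union hd2]
    omega
  -- 0 ∉ frk S
  have h0' : 0 ∉ frk S := by
    rw [hfrk]
    intro h
    rw [hmem' 0] at h
    rcases h with ⟨h1, _, _⟩ | ⟨h1, _⟩
    · exact h0 h1
    · omega
  -- frk S ≠ S
  have hnefix : frk S ≠ S := by
    intro heq
    have hin : m + 1 ∈ frk S := by rw [hfrk, hmem']; right; omega
    rw [heq] at hin
    have := le_m _ hin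
    omega
  refine ⟨hsum, h0', hnefix, ?_⟩
  -- involution
  rw [hfrk]
  have hne' : S'.Nonempty := ⟨m + 1, by rw [hmem']; right; omega⟩
  have hmax' : S'.max' hne' = m + 1 := by
    apply le_antisymm
    · apply Finset.max'_le
      intro x hx
      rw [hmem'] at hx
      rcases hx with ⟨_, h1, _⟩ | ⟨_, h1⟩ <;> omega
    · exact S'.le_max' _ (by rw [hmem']; right; omega)
  have hmin' : s + 1 ≤ S'.min' hne' := by
    apply Finset.le_min'
    intro x hx
    rw [hmem'] at hx
    rcases hx with ⟨h1, _, h3⟩ | ⟨h1, _⟩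
    · have := s_le x h1; omega
    · omega
  have hgap2 : gapb S' (m + 1) = m - s + 1 := by
    rw [gapb]
    apply le_antisymm
    · apply Finset.sup_le
      intro x hx
      simp only [Finset.mem_filter, Finset.mem_range] at hx
      obtain ⟨hx1, hx2⟩ := hx
      show id x ≤ m - s + 1
      simp only [id_eq]
      by_contra hc
      exact hx2 ((hmem' x).2 (Or.inr ⟨by omega, by omega⟩))
    · have hmem2 : m - s + 1 ∈ (range (m+1)).filter (fun x => x ∉ S') := by
        simp only [Finset.mem_filter, Finset.mem_range]
        refine ⟨by omega, ?_⟩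
        rw [hmem']
        push_neg
        constructor
        · intro _ h; omega
        · intro h; omega
      exact Finset.le_sup (f := id) hmem2
  have hcond : ¬ (S'.min' hne' ≤ S'.max' hne' - gapb S' (S'.max' hne')) := by
    rw [hmax', hgap2]
    omega
  rw [frk, dif_pos hne', if_neg hcond, hmax', hgap2]
  have e5 : m + 1 - (m - s + 1) = s := by omega
  have e6 : m - s + 1 - 1 = m - s := by omega
  have e7 : m + 1 - 1 = m := by omega
  rw [e5, e6, e7]
  ext x
  simp only [Finset.mem_insert, Finset.mem_union, Finset.mem_filter, Finset.mem_Icc, hmem']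
  constructor
  · rintro (rfl | ⟨(⟨hx1, hx2, hx3⟩ | ⟨hx1, hx2⟩), hle⟩ | ⟨h1, h2⟩)
    · exact sS
    · exact hx1
    · omega
    · exact hrun x (by omega) h2
  · intro hx
    have hxm := le_m x hx
    have hxs := s_le x hx
    by_cases hc : m - s + 1 ≤ x
    · right; right; omega
    · by_cases hcs : x = s
      · exact Or.inl hcs
      · right; left; exact ⟨Or.inl ⟨hx, by omega, hcs⟩, by omega⟩

theorem caseB (S : Finset ℕ) (hne : S.Nonempty) (h0 : 0 ∉ S)
    (hpent : ∀ c m', S = Icc (c+1) m' → m' ≠ 2*c ∧ m' ≠ 2*c+1)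
    (hbr : ¬ (S.min' hne ≤ S.max' hne - gapb S (S.max' hne))) :
    (frk S).sum id = S.sum id ∧ 0 ∉ frk S ∧ frk S ≠ S ∧ frk (frk S) = S := by
  obtain ⟨hblt, hbS, hrun⟩ := gapb_spec S hne h0
  set m := S.max' hne with hm
  set s := S.min' hne with hs
  set b := gapb S m with hb
  have sS : s ∈ S := S.min'_mem hne
  have mS : m ∈ S := S.max'_mem hne
  have le_m : ∀ x ∈ S, x ≤ m := fun x hx => S.le_max' x hx
  have s_le : ∀ x ∈ S, s ≤ x := fun x hx => S.min'_le x hx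
  have hs1 : 1 ≤ s := Nat.pos_of_ne_zero (fun h => h0 (h ▸ sS))
  have hsm : s ≤ m := s_le m mS
  have hsb : s ≤ b + 1 := s_le (b+1) (hrun (b+1) (by omega) (by omega))
  have hsnb : s ≠ b := fun h => hbS (h ▸ sS)
  have hb1 : 1 ≤ b := by omega
  have hB : m + 1 ≤ s + b := by omega
  have hBm : m + 1 ≤ 2 * b := by
    rcases Nat.lt_or_ge s (b+1) with hc | hc
    · omega
    · have hseq : s = b + 1 := by omega
      have hrunS : S = Icc (b+1) m := by
        ext x
        simp only [Finset.mem_Icc]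
        constructor
        · intro hx; exact ⟨hseq ▸ s_le x hx, le_m x hx⟩
        · intro hx; exact hrun x (by omega) hx.2
      have := (hpent b m hrunS).1
      omega
  set S' := insert (m - b) ((S.filter (fun x => x ≤ b - 1)) ∪ Icc b (m - 1)) with hS'
  have hfrk : frk S = S' := by
    rw [frk, dif_pos hne, if_neg hbr]
  have hmem' : ∀ x, x ∈ S' ↔ x = m - b ∨ (x ∈ S ∧ x ≤ b - 1) ∨ (b ≤ x ∧ x ≤ m - 1) := by
    intro x
    simp only [hS', Finset.mem_insert, Finset.mem_union, Finset.mem_filter, Finset.mem_Icc]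
  -- sums
  have hsplit : S = (S.filter (fun x => x ≤ b - 1)) ∪ Icc (b + 1) m := by
    ext x
    simp only [Finset.mem_union, Finset.mem_filter, Finset.mem_Icc]
    constructor
    · intro hx
      have := le_m x hx
      by_cases hc : x ≤ b - 1
      · exact Or.inl ⟨hx, hc⟩
      · right
        have : x ≠ b := fun h => hbS (h ▸ hx)
        omega
    · rintro (⟨hx, _⟩ | ⟨h1, h2⟩)
      · exact hx
      · exact hrun x (by omega) h2
  have hd1 : Disjoint (S.filter (fun x => x ≤ b - 1)) (Icc (b + 1) m) := by
    rw [Finset.disjoint_left]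
    intro x hx hx2
    simp only [Finset.mem_filter, Finset.mem_Icc] at hx hx2
    omega
  have hd2 : Disjoint (S.filter (fun x => x ≤ b - 1)) (Icc b (m - 1)) := by
    rw [Finset.disjoint_left]
    intro x hx hx2
    simp only [Finset.mem_filter, Finset.mem_Icc] at hx hx2
    omega
  have hnotin : m - b ∉ (S.filter (fun x => x ≤ b - 1)) ∪ Icc b (m - 1) := by
    intro h
    rw [Finset.mem_union, Finset.mem_filter, Finset.mem_Icc] at h
    rcases h with ⟨h1, _⟩ | ⟨h1, _⟩
    · have := s_le _ h1; omega
    · omega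
  have e1 : ∑ x ∈ S, x = (∑ x ∈ S.filter (fun x => x ≤ b - 1), x) + ∑ x ∈ Icc (b + 1) m, x := by
    conv_lhs => rw [hsplit]
    rw [Finset.sum_union hd1]
  have e2 : ∑ x ∈ Icc (b + 1) m, x = ((m - 1) + 1) + ∑ x ∈ Icc (b + 1) (m - 1), x := by
    conv_lhs => rw [show m = (m - 1) + 1 from by omega]
    exact sum_Icc_right_insert _ _ (by omega)
  have e3 : ∑ x ∈ Icc b (m - 1), x = b + ∑ x ∈ Icc (b + 1) (m - 1), x :=
    sum_Icc_left_insert _ _ (by omega)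
  have hsum : (frk S).sum id = S.sum id := by
    rw [hfrk]
    show (∑ x ∈ S', id x) = ∑ x ∈ S, id x
    simp only [id_eq]
    rw [hS', Finset.sum_insert hnotin, Finset.sum_union hd2]
    omega
  have h0' : 0 ∉ frk S := by
    rw [hfrk]
    intro h
    rw [hmem' 0] at h
    rcases h with h1 | ⟨h1, _⟩ | ⟨h1, _⟩
    · omega
    · exact h0 h1
    · omega
  have hnefix : frk S ≠ S := by
    intro heq
    have hin : m ∉ frk S := by
      rw [hfrk, hmem']
      push_neg
      refine ⟨by omega, fun h => by omega, fun h => by omega⟩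
    rw [heq] at hin
    exact hin mS
  refine ⟨hsum, h0', hnefix, ?_⟩
  rw [hfrk]
  have hne' : S'.Nonempty := ⟨m - b, by rw [hmem']; left; rfl⟩
  have hmax' : S'.max' hne' = m - 1 := by
    apply le_antisymm
    · apply Finset.max'_le
      intro x hx
      rw [hmem'] at hx
      rcases hx with h1 | ⟨_, h1⟩ | ⟨_, h1⟩ <;> omega
    · exact S'.le_max' _ (by rw [hmem']; right; right; omega)
  have hmin' : S'.min' hne' = m - b := by
    apply le_antisymm
    · exact S'.min'_le _ (by rw [hmem']; left; rfl)
    · apply Finset.le_min'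
      intro x hx
      rw [hmem'] at hx
      rcases hx with h1 | ⟨h1, h2⟩ | ⟨h1, _⟩
      · omega
      · have := s_le x h1; omega
      · omega
  have hgap2 : gapb S' (m - 1) ≤ b - 1 := by
    rw [gapb]
    apply Finset.sup_le
    intro x hx
    simp only [Finset.mem_filter, Finset.mem_range] at hx
    obtain ⟨hx1, hx2⟩ := hx
    show id x ≤ b - 1
    simp only [id_eq]
    by_contra hc
    exact hx2 ((hmem' x).2 (Or.inr (Or.inr ⟨by omega, by omega⟩)))
  have hcond : S'.min' hne' ≤ S'.max' hne' - gapb S' (S'.max' hne') := by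
    rw [hmin', hmax']
    omega
  rw [frk, dif_pos hne', if_pos hcond, hmax', hmin']
  have e5 : m - 1 - (m - b) = b - 1 := by omega
  have e6 : b - 1 + 2 = b + 1 := by omega
  have e7 : m - 1 + 1 = m := by omega
  rw [e5, e6, e7]
  ext x
  simp only [Finset.mem_union, Finset.mem_erase, Finset.mem_filter, Finset.mem_Icc, hmem']
  constructor
  · rintro (⟨hx1, (h2 | ⟨h3, h4⟩ | ⟨h3, h4⟩), hle⟩ | ⟨h1, h2⟩)
    · exact absurd h2 hx1
    · exact h3
    · omega
    · exact hrun x (by omega) h2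
  · intro hx
    have hxm := le_m x hx
    have hxs := s_le x hx
    by_cases hc : b + 1 ≤ x
    · right; omega
    · left
      have hxb : x ≠ b := fun h => hbS (h ▸ hx)
      exact ⟨by omega, Or.inr (Or.inl ⟨hx, by omega⟩), by omega⟩

/-- `a k n` is the number of partitions of `n` in which even parts appear in a single
color while odd parts may appear in any one of `k` colors; equivalently, it is the
coefficient of `q^n` in `∏_{i ≥ 1} (1 - q^{2i})^{k-1} / ∏_{i ≥ 1} (1 - q^i)^k` over `ℤ`.
Each factor `(1 - q^i)` has constant term `1`, hence is a unit in `ℤ⟦q⟧`, and its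
inverse is given by `Ring.inverse`.  Since every factor with index `i > n` is of the
form `1 + O(q^{n+1})` and so does not affect the coefficient of `q^n`, the infinite
products may be truncated at `i = n + 1`. -/
noncomputable def a (k n : ℕ) : ℤ :=
  PowerSeries.coeff n
    ((∏ i ∈ Finset.range (n + 1),
        ((1 : PowerSeries ℤ) - (PowerSeries.X : PowerSeries ℤ) ^ (2 * (i + 1))) ^ (k - 1)) *
      ∏ i ∈ Finset.range (n + 1),
        (Ring.inverse ((1 : PowerSeries ℤ) - (PowerSeries.X : PowerSeries ℤ) ^ (i + 1))) ^ k)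

lemma coeff_eq_card (N : ℕ) :
    PowerSeries.coeff N (∏ i ∈ range (N+1), ((1:(ZMod 2)⟦X⟧) + X^(i+1)))
      = (((range (N+1)).powerset.filter (fun t => ∑ i ∈ t, (i+1) = N)).card : ZMod 2) := by
  have h : ∏ i ∈ range (N+1), ((1:(ZMod 2)⟦X⟧) + X^(i+1))
      = ∑ t ∈ (range (N+1)).powerset, X ^ (∑ i ∈ t, (i+1)) := by
    have h2 := Finset.prod_add (fun i => (X:(ZMod 2)⟦X⟧)^(i+1)) (fun _ => (1:(ZMod 2)⟦X⟧))
      (range (N+1))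
    simp only [Finset.prod_const_one, mul_one, Finset.prod_pow_eq_pow_sum] at h2
    rw [← h2]
    exact Finset.prod_congr rfl fun i _ => add_comm _ _
  rw [h, map_sum]
  simp only [PowerSeries.coeff_X_pow]
  rw [Finset.sum_boole]
  congr 1
  rw [Finset.filter_congr (fun t _ => by rw [eq_comm])]

lemma a3_card (N : ℕ) : ((a 3 N : ℤ) : ZMod 2)
    = (((range (N+1)).powerset.filter (fun t => ∑ i ∈ t, (i+1) = N)).card : ZMod 2) := by
  rw [a]
  have h1 : ∀ φ : PowerSeries ℤ, ((PowerSeries.coeff N φ : ℤ) : ZMod 2)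
      = PowerSeries.coeff N (PowerSeries.map (Int.castRingHom (ZMod 2)) φ) := by
    intro φ; rw [PowerSeries.coeff_map]; rfl
  rw [h1]
  have h2 : PowerSeries.map (Int.castRingHom (ZMod 2)) ((∏ i ∈ Finset.range (N + 1),
        ((1 : PowerSeries ℤ) - (PowerSeries.X : PowerSeries ℤ) ^ (2 * (i + 1))) ^ (3 - 1)) *
      ∏ i ∈ Finset.range (N + 1),
        (Ring.inverse ((1 : PowerSeries ℤ) - (PowerSeries.X : PowerSeries ℤ) ^ (i + 1))) ^ 3)
      = (∏ i ∈ range (N + 1), ((1 : PowerSeries (ZMod 2)) - X ^ (2 * (i + 1))) ^ 2) *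
        ∏ i ∈ range (N + 1), (Ring.inverse ((1 : PowerSeries (ZMod 2)) - X ^ (i + 1))) ^ 3 := by
    rw [map_mul, map_prod, map_prod]
    congr 1
    · refine Finset.prod_congr rfl fun i _ => ?_
      rw [map_pow, map_sub, map_one, map_pow, PowerSeries.map_X]
    · refine Finset.prod_congr rfl fun i _ => ?_
      rw [map_pow, map_ringInverse _ _ (unit_fact i), map_sub, map_one, map_pow,
        PowerSeries.map_X]
  rw [h2, key_prod N, coeff_eq_card N]

lemma pent_arith (p : ℕ) (hp : p = 7 ∨ p = 11 ∨ p = 13) (n c m' : ℕ)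
    (hsum : (∑ x ∈ Icc (c+1) m', x) = p * n + 6) : m' ≠ 2*c ∧ m' ≠ 2*c+1 := by
  have hcm : c + 1 ≤ m' := by
    by_contra hc
    rw [Finset.Icc_eq_empty (by omega)] at hsum
    simp at hsum
  have h2 := sum_Icc_twice (c+1) m' (by omega)
  rw [hsum] at h2
  simp only [Nat.add_sub_cancel] at h2
  constructor <;> intro h <;> subst h
  · have h3 := congrArg (Nat.cast : ℕ → ZMod p) h2
    push_cast at h3
    rw [ZMod.natCast_self] at h3
    have hx : ((12 : ZMod p) + ((c:ZMod p)+1)*(c:ZMod p)) = (2*(c:ZMod p)+1)*(2*(c:ZMod p)) := by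
      linear_combination h3
    rcases hp with rfl | rfl | rfl
    · exact (by decide : ∀ x : ZMod 7, ¬(12 + (x+1)*x = (2*x+1)*(2*x))) _ hx
    · exact (by decide : ∀ x : ZMod 11, ¬(12 + (x+1)*x = (2*x+1)*(2*x))) _ hx
    · exact (by decide : ∀ x : ZMod 13, ¬(12 + (x+1)*x = (2*x+1)*(2*x))) _ hx
  · have h3 := congrArg (Nat.cast : ℕ → ZMod p) h2
    push_cast at h3
    rw [ZMod.natCast_self] at h3
    have hx : ((12 : ZMod p) + ((c:ZMod p)+1)*(c:ZMod p)) = (2*(c:ZMod p)+2)*(2*(c:ZMod p)+1) := by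
      linear_combination h3
    rcases hp with rfl | rfl | rfl
    · exact (by decide : ∀ x : ZMod 7, ¬(12 + (x+1)*x = (2*x+2)*(2*x+1))) _ hx
    · exact (by decide : ∀ x : ZMod 11, ¬(12 + (x+1)*x = (2*x+2)*(2*x+1))) _ hx
    · exact (by decide : ∀ x : ZMod 13, ¬(12 + (x+1)*x = (2*x+2)*(2*x+1))) _ hx

lemma main_card (N : ℕ) (hN0 : 0 < N)
    (hpentN : ∀ c m', (∑ x ∈ Icc (c+1) m', x) = N → m' ≠ 2*c ∧ m' ≠ 2*c+1) :
    2 ∣ (((range (N+1)).powerset.filter (fun t => ∑ i ∈ t, (i+1) = N)).card) := by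
  have hcard : (((range (N+1)).powerset.filter (fun t => ∑ i ∈ t, (i+1) = N)).card)
      = (((Icc 1 N).powerset.filter (fun S => ∑ x ∈ S, x = N)).card) := by
    refine Finset.card_bij' (fun t _ => t.image (· + 1)) (fun S _ => S.image (· - 1)) ?_ ?_ ?_ ?_
    case refine_1 =>
      intro t ht
      simp only [Finset.mem_filter, Finset.mem_powerset] at ht ⊢
      obtain ⟨hsub, hsum⟩ := ht
      have hsumim : ∑ x ∈ t.image (· + 1), x = ∑ i ∈ t, (i + 1) :=
        Finset.sum_image (by intro x _ y _ h; simp only at h; omega)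
      constructor
      · intro x hx
        simp only [Finset.mem_image] at hx
        obtain ⟨y, hy, rfl⟩ := hx
        rw [Finset.mem_Icc]
        refine ⟨by omega, ?_⟩
        calc y + 1 ≤ ∑ i ∈ t, (i + 1) :=
              Finset.single_le_sum (fun i _ => Nat.zero_le _) hy
          _ = N := hsum
      · rw [hsumim, hsum]
    case refine_2 =>
      intro S hS
      simp only [Finset.mem_filter, Finset.mem_powerset] at hS ⊢
      obtain ⟨hsub, hsum⟩ := hS
      have h1 : ∀ x ∈ S, 1 ≤ x ∧ x ≤ N := by
        intro x hx; have := hsub hx; rwa [Finset.mem_Icc] at this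
      constructor
      · intro y hy
        simp only [Finset.mem_image] at hy
        obtain ⟨x, hx, rfl⟩ := hy
        rw [Finset.mem_range]
        have := (h1 x hx).2; omega
      · rw [Finset.sum_image (by intro x hx y hy h; simp only at h; have := (h1 x hx).1; have := (h1 y hy).1; omega)]
        rw [← hsum]
        apply Finset.sum_congr rfl
        intro x hx; have := (h1 x hx).1; omega
    case refine_3 =>
      intro t ht
      show Finset.image (fun x => x - 1) (Finset.image (fun x => x + 1) t) = t
      rw [Finset.image_image]
      conv_rhs => rw [← Finset.image_id (s := t)]
      apply Finset.image_congr
      intro x _; simp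
    case refine_4 =>
      intro S hS
      simp only [Finset.mem_filter, Finset.mem_powerset] at hS
      have h1 : ∀ x ∈ S, 1 ≤ x := by
        intro x hx; have := hS.1 hx; rw [Finset.mem_Icc] at this; omega
      show Finset.image (fun x => x + 1) (Finset.image (fun x => x - 1) S) = S
      rw [Finset.image_image]
      ext x
      simp only [Finset.mem_image, Function.comp]
      constructor
      · rintro ⟨y, hy, rfl⟩
        have := h1 y hy
        simpa [Nat.sub_add_cancel this] using hy
      · intro hx
        exact ⟨x, hx, by have := h1 x hx; omega⟩
  rw [hcard]
  apply even_card_of_invol _ frk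
  · intro S hS
    simp only [Finset.mem_filter, Finset.mem_powerset] at hS ⊢
    obtain ⟨hsub, hsum⟩ := hS
    have h0 : 0 ∉ S := fun h => by have := hsub h; rw [Finset.mem_Icc] at this; omega
    have hne : S.Nonempty := by
      rcases S.eq_empty_or_nonempty with rfl | h
      · simp at hsum; omega
      · exact h
    have hpent : ∀ c m', S = Icc (c+1) m' → m' ≠ 2*c ∧ m' ≠ 2*c+1 := by
      intro c m' hrun
      exact hpentN c m' (by rw [← hrun]; exact hsum)
    have hspec : (frk S).sum id = S.sum id ∧ 0 ∉ frk S ∧ frk S ≠ S ∧ frk (frk S) = S := by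
      by_cases hbr : S.min' hne ≤ S.max' hne - gapb S (S.max' hne)
      · exact caseA S hne h0 hpent hbr
      · exact caseB S hne h0 hpent hbr
    obtain ⟨hsum', h0', _, _⟩ := hspec
    have hsum'' : ∑ x ∈ frk S, x = N := by
      have : (frk S).sum id = ∑ x ∈ frk S, x := rfl
      have h2 : S.sum id = ∑ x ∈ S, x := rfl
      rw [← this, hsum', h2, hsum]
    constructor
    · intro x hx
      rw [Finset.mem_Icc]
      have hx1 : 1 ≤ x := by rcases Nat.eq_zero_or_pos x with rfl | h; exact absurd hx h0'; exact h
      refine ⟨hx1, ?_⟩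
      calc x ≤ ∑ y ∈ frk S, y := Finset.single_le_sum (f := fun i => i) (fun i _ => Nat.zero_le _) hx
        _ = N := hsum''
    · exact hsum''
  · intro S hS
    simp only [Finset.mem_filter, Finset.mem_powerset] at hS
    obtain ⟨hsub, hsum⟩ := hS
    have h0 : 0 ∉ S := fun h => by have := hsub h; rw [Finset.mem_Icc] at this; omega
    have hne : S.Nonempty := by
      rcases S.eq_empty_or_nonempty with rfl | h
      · simp at hsum; omega
      · exact h
    have hpent : ∀ c m', S = Icc (c+1) m' → m' ≠ 2*c ∧ m' ≠ 2*c+1 := by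
      intro c m' hrun
      exact hpentN c m' (by rw [← hrun]; exact hsum)
    by_cases hbr : S.min' hne ≤ S.max' hne - gapb S (S.max' hne)
    · exact (caseA S hne h0 hpent hbr).2.2.2
    · exact (caseB S hne h0 hpent hbr).2.2.2
  · intro S hS
    simp only [Finset.mem_filter, Finset.mem_powerset] at hS
    obtain ⟨hsub, hsum⟩ := hS
    have h0 : 0 ∉ S := fun h => by have := hsub h; rw [Finset.mem_Icc] at this; omega
    have hne : S.Nonempty := by
      rcases S.eq_empty_or_nonempty with rfl | h
      · simp at hsum; omega
      · exact h
    have hpent : ∀ c m', S = Icc (c+1) m' → m' ≠ 2*c ∧ m' ≠ 2*c+1 := by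
      intro c m' hrun
      exact hpentN c m' (by rw [← hrun]; exact hsum)
    by_cases hbr : S.min' hne ≤ S.max' hne - gapb S (S.max' hne)
    · exact (caseA S hne h0 hpent hbr).2.2.1
    · exact (caseB S hne h0 hpent hbr).2.2.1

theorem a_three_cong_mod_two_shift_six (p : ℕ)
    (hp : p ∈ ({7, 11, 13} : Finset ℕ)) (n : ℕ) :
    (2 : ℤ) ∣ a 3 (p * n + 6) := by
  have hp' : p = 7 ∨ p = 11 ∨ p = 13 := by
    simp only [Finset.mem_insert, Finset.mem_singleton] at hp
    tauto
  set N := p * n + 6 with hN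
  have hN0 : 0 < N := by omega
  have hdvd : 2 ∣ (((range (N+1)).powerset.filter (fun t => ∑ i ∈ t, (i+1) = N)).card) := by
    apply main_card N hN0
    intro c m' hsum
    exact pent_arith p hp' n c m' (by rw [hsum, hN])
  have hzero : ((a 3 N : ℤ) : ZMod 2) = 0 := by
    rw [a3_card]
    exact_mod_cast (ZMod.natCast_eq_zero_iff _ 2).2 hdvd
  have := (ZMod.intCast_zmod_eq_zero_iff_dvd (a 3 N) 2).1 hzero
  exact_mod_cast this
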